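/- Scaling relation between the primal and dual KKT systems. Let A ∈ R^{m×N}, b ∈ R^m, c ∈ R^N, ρ > 0, and for k = 1,…,p let H_k ∈ R^{n_k×N} and w_k ∈ R^{n_k}; set D = Σ_{k=1}^p H_kᵀ H_k. Then (x, y) ∈ R^N × R^m satisfies the dual-form KKT system D x + Aᵀ y = c − Σ_k H_kᵀ w_k and A x = −ρ^{-1} b if and only if (−x, −y) satisfies the primal-form KKT system D x̂ + Aᵀ ŷ = Σ_k H_kᵀ w_k − ρ^{-1} c′ and A x̂ = b′ with the rescaled data c′ = ρ c and b′ = ρ^{-1} b. Hence the two ADMM algorithms solve linear systems with the same coefficient matrix [[D, Aᵀ],[A, 0]] and are scaled versions of each other. -/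
import Mathlib

open Matrix Finset

/-- **Scaling relation between the primal and dual KKT systems.** `(x, y)`
satisfies the dual-form KKT system
`D x + Aᵀ y = c − Σ_k H_kᵀ w_k`, `A x = −ρ⁻¹ b`
if and only if `(−x, −y)` satisfies the primal-form KKT system
`D x̂ + Aᵀ ŷ = Σ_k H_kᵀ w_k − ρ⁻¹ c′`, `A x̂ = b′`
with the rescaled data `c′ = ρ c` and `b′ = ρ⁻¹ b`, where
`D = Σ_k H_kᵀ H_k`. Hence the two ADMM algorithms solve linear systems with
the same coefficient matrix `[[D, Aᵀ],[A, 0]]`. -/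
theorem primal_dual_kkt_scaling {m N p : ℕ}
    (A : Matrix (Fin m) (Fin N) ℝ) (b : Fin m → ℝ) (c : Fin N → ℝ)
    (ρ : ℝ) (hρ : 0 < ρ)
    (nk : Fin p → ℕ) (H : (k : Fin p) → Matrix (Fin (nk k)) (Fin N) ℝ)
    (w : (k : Fin p) → Fin (nk k) → ℝ)
    (x : Fin N → ℝ) (y : Fin m → ℝ) :
    ((∑ k, (H k)ᵀ * H k).mulVec x + Aᵀ.mulVec y =
          c - ∑ k, (H k)ᵀ.mulVec (w k) ∧
        A.mulVec x = -(ρ⁻¹ • b)) ↔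
      ((∑ k, (H k)ᵀ * H k).mulVec (-x) + Aᵀ.mulVec (-y) =
          (∑ k, (H k)ᵀ.mulVec (w k)) - ρ⁻¹ • (ρ • c) ∧
        A.mulVec (-x) = ρ⁻¹ • b) := by
  have h1 : ρ⁻¹ • (ρ • c) = c := by
    rw [smul_smul, inv_mul_cancel₀ hρ.ne', one_smul]
  rw [h1, Matrix.mulVec_neg, Matrix.mulVec_neg, Matrix.mulVec_neg]
  constructor
  · rintro ⟨h2, h3⟩
    refine ⟨?_, by rw [h3, neg_neg]⟩
    rw [← neg_add, h2]; abel
  · rintro ⟨h2, h3⟩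
    refine ⟨?_, by rw [← neg_neg (A.mulVec x), h3]⟩
    have := congrArg Neg.neg h2
    rw [neg_add, neg_neg, neg_neg] at this
    rw [this]; abel
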